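/- For every n and every integer r with 0 ≤ r ≤ n, let B(r) = {x ∈ F_2^n : |x| ≤ r} be the Hamming ball of radius r. Then the maximal adjacency eigenvalue of the induced subgraph satisfies λ_{B(r)} ≥ 2√(r(n−r)) − o(n) as n → ∞ (for r = r(n)); equivalently, for every ε > 0 there exists N such that for all n ≥ N and all 0 ≤ r ≤ n/2, λ_{B(r)} ≥ 2√(r(n−r)) − εn. -/

import Mathlib

open Finset Filter

noncomputable section

/-- The Hamming cube `F_2^n`. -/
abbrev Ham (n : ℕ) := Fin n → ZMod 2

/-- Average (expectation w.r.t. uniform measure) of a function on the cube. -/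
def avg {n : ℕ} (f : Ham n → ℝ) : ℝ := (∑ x, f x) / 2 ^ n

/-- Normalized inner product `⟨f,g⟩ = E (f·g)`. -/
def inn {n : ℕ} (f g : Ham n → ℝ) : ℝ := avg (fun x => f x * g x)

/-- The character `W_S(x) = (-1)^{⟨x,S⟩}`. -/
def chr {n : ℕ} (S x : Ham n) : ℝ := if (∑ i, x i * S i) = 0 then 1 else -1

/-- Fourier transform `f^(S) = E (f · W_S)`. -/
def ft {n : ℕ} (f : Ham n → ℝ) (S : Ham n) : ℝ := avg (fun x => f x * chr S x)

/-- Convolution `(f ∗ g)(x) = E_y f(y) g(x+y)`. -/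
def cnv {n : ℕ} (f g : Ham n → ℝ) (x : Ham n) : ℝ := avg (fun y => f y * g (x + y))

/-- Adjacency operator of the Hamming cube graph: `(Af)(x) = ∑_{y ∼ x} f(y)`. -/
def adjOp {n : ℕ} (f : Ham n → ℝ) (x : Ham n) : ℝ :=
  ∑ y, if hammingDist x y = 1 then f y else 0

/-- Characteristic function of a set. -/
def ind {n : ℕ} (C : Set (Ham n)) : Ham n → ℝ := C.indicator 1

/-- Maximal eigenvalue of the adjacency matrix of the subgraph induced on `B`,
expressed as the supremum of Rayleigh quotients of functions supported on `B`. -/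
def lambdaB {n : ℕ} (B : Set (Ham n)) : ℝ :=
  sSup {r | ∃ f : Ham n → ℝ, f ≠ 0 ∧ (∀ x, x ∉ B → f x = 0) ∧
    r = inn (adjOp f) f / inn f f}


set_option maxHeartbeats 1000000

namespace S15
variable {n : ℕ}


/-- basis vector -/
def e (i : Fin n) : Ham n := fun j => if j = i then 1 else 0

lemma zmod2_ne_iff (a b : ZMod 2) : a ≠ b ↔ b = a + 1 := by revert a b; decide

lemma norm_e (i : Fin n) : hammingNorm (e i) = 1 := by
  unfold hammingNorm e
  rw [show ({j | (if j = i then (1:ZMod 2) else 0) ≠ 0} : Finset (Fin n)) = {i} by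
    ext j; simp only [mem_filter, mem_univ, true_and, mem_singleton]
    by_cases h : j = i <;> simp [h]]
  simp

lemma dist_one_iff (x y : Ham n) : hammingDist x y = 1 ↔ ∃ i, y = x + e i := by
  constructor
  · intro h
    unfold hammingDist at h
    obtain ⟨i, hi⟩ := Finset.card_eq_one.mp h
    refine ⟨i, funext fun j => ?_⟩
    have hmem : ∀ j : Fin n, x j ≠ y j ↔ j = i := by
      intro j
      constructor
      · intro hj; have : j ∈ ({j | x j ≠ y j} : Finset (Fin n)) := by simpa using hj
        rw [hi] at this; simpa using this
      · intro hj; subst hj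
        have : j ∈ ({i | x i ≠ y i} : Finset (Fin n)) := by rw [hi]; simp
        simpa using this
    by_cases hj : j = i
    · subst hj
      have := (hmem j).mpr rfl
      have := (zmod2_ne_iff _ _).mp this
      simp [e, Pi.add_apply, this]
    · have : ¬ (x j ≠ y j) := fun hne => hj ((hmem j).mp hne)
      push_neg at this
      simp [e, Pi.add_apply, hj, ← this]
  · rintro ⟨i, rfl⟩
    rw [hammingDist_eq_hammingNorm]
    have h1 : x - (x + e i) = e i := by
      have : x - (x + e i) = -(e i) := by ring
      rw [this]; funext j
      simp only [Pi.neg_apply, e]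
      by_cases h : j = i <;> simp [h] <;> decide
    rw [neg_add_cancel_left, norm_e]


lemma add_e_inj (x : Ham n) : Function.Injective (fun i => x + e i) := by
  intro i i' h
  have h2 : e i = e i' := by
    funext j
    have := congrFun h j
    simpa [Pi.add_apply] using this
  by_contra hne
  have := congrFun h2 i
  simp only [e, if_true, eq_self_iff_true] at this
  rw [if_neg hne] at this
  exact one_ne_zero this

lemma sum_neighbors (x : Ham n) (F : Ham n → ℝ) :
    (∑ y, if hammingDist x y = 1 then F y else 0) = ∑ i, F (x + e i) := by
  rw [← Finset.sum_filter]
  rw [show (Finset.univ.filter (fun y => hammingDist x y = 1)) = Finset.univ.image (fun i => x + e i) by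
    ext y
    simp only [mem_filter, mem_univ, true_and, mem_image]
    rw [dist_one_iff]
    constructor
    · rintro ⟨i, rfl⟩; exact ⟨i, by simp⟩
    · rintro ⟨i, _, rfl⟩; exact ⟨i, rfl⟩]
  rw [Finset.sum_image (fun i _ i' _ h => add_e_inj x h)]

lemma norm_add_e (x : Ham n) (i : Fin n) :
    hammingNorm (x + e i) = if x i = 0 then hammingNorm x + 1 else hammingNorm x - 1 := by
  have hcoord : ∀ j, (x + e i) j = if j = i then x i + 1 else x j := by
    intro j; by_cases h : j = i <;> simp [e, Pi.add_apply, h]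
  unfold hammingNorm
  by_cases h : x i = 0
  · rw [if_pos h]
    rw [show (Finset.univ.filter (fun j => (x + e i) j ≠ 0)) = insert i (Finset.univ.filter (fun j => x j ≠ 0)) by
      ext j
      simp only [mem_filter, mem_univ, true_and, mem_insert]
      rw [hcoord j]
      by_cases hj : j = i
      · subst hj; simp [h]
      · simp [hj]]
    rw [Finset.card_insert_of_notMem (by simp [h])]
  · rw [if_neg h]
    have hx1 : x i = 1 := by
      have := x i; revert h; revert this
      have : ∀ a : ZMod 2, a ≠ 0 → a = 1 := by decide
      exact fun _ hh => this (x i) hh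
    rw [show (Finset.univ.filter (fun j => (x + e i) j ≠ 0)) = (Finset.univ.filter (fun j => x j ≠ 0)).erase i by
      ext j
      simp only [mem_filter, mem_univ, true_and, mem_erase]
      rw [hcoord j]
      by_cases hj : j = i
      · subst hj; simp [hx1]; decide
      · simp [hj]]
    rw [Finset.card_erase_of_mem (by simp [h])]

lemma card_norm (x : Ham n) : ({i | x i ≠ 0} : Finset (Fin n)).card = hammingNorm x := rfl

lemma sum_flip (g : ℕ → ℝ) (x : Ham n) :
    (∑ i, g (hammingNorm (x + e i))) =
      ((n - hammingNorm x : ℕ) : ℝ) * g (hammingNorm x + 1)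
        + (hammingNorm x : ℝ) * g (hammingNorm x - 1) := by
  have : ∀ i, g (hammingNorm (x + e i))
      = if x i = 0 then g (hammingNorm x + 1) else g (hammingNorm x - 1) := by
    intro i; rw [norm_add_e]; by_cases h : x i = 0 <;> simp [h]
  rw [Finset.sum_congr rfl fun i _ => this i]
  rw [Finset.sum_ite, Finset.sum_const, Finset.sum_const]
  have hc1 : ({i | ¬ x i = 0} : Finset (Fin n)).card = hammingNorm x := card_norm x
  have hc2 : ({i | x i = 0} : Finset (Fin n)).card = n - hammingNorm x := by
    have := Finset.card_filter_add_card_filter_not (s := (Finset.univ : Finset (Fin n)))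
      (p := fun i => x i = 0)
    simp only [Finset.card_univ, Fintype.card_fin] at this
    omega
  rw [hc1, hc2]
  simp [nsmul_eq_mul]
  try ring

lemma adjOp_comp_norm (g : ℕ → ℝ) (x : Ham n) :
    adjOp (fun y => g (hammingNorm y)) x =
      ((n - hammingNorm x : ℕ) : ℝ) * g (hammingNorm x + 1)
        + (hammingNorm x : ℝ) * g (hammingNorm x - 1) := by
  unfold adjOp
  rw [sum_neighbors x (fun y => g (hammingNorm y)), sum_flip]

lemma degree (x : Ham n) : (∑ y, if hammingDist x y = 1 then (1:ℝ) else 0) = n := by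
  rw [sum_neighbors x (fun _ => (1:ℝ))]
  simp


lemma inn_self_pos {f : Ham n → ℝ} (hf : f ≠ 0) : 0 < inn f f := by
  unfold inn avg
  apply div_pos _ (by positivity)
  obtain ⟨x₀, hx₀⟩ := Function.ne_iff.mp hf
  have h0 : (0:ℝ) < f x₀ * f x₀ := by
    rcases (mul_self_nonneg (f x₀)).lt_or_eq with h | h
    · exact h
    · exact absurd (by nlinarith : f x₀ = 0) hx₀
  exact lt_of_lt_of_le h0
    (Finset.single_le_sum (fun x _ => mul_self_nonneg (f x)) (Finset.mem_univ x₀))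

lemma inn_adj_le (f : Ham n → ℝ) : inn (adjOp f) f ≤ n * inn f f := by
  unfold inn avg
  rw [div_le_iff₀ (by positivity : (0:ℝ) < 2^n)]
  rw [mul_assoc, div_mul_cancel₀ _ (by positivity : (2:ℝ)^n ≠ 0)]
  have step1 : ∀ x : Ham n, adjOp f x * f x
      = ∑ y, if hammingDist x y = 1 then f y * f x else 0 := by
    intro x
    unfold adjOp
    rw [Finset.sum_mul]
    exact Finset.sum_congr rfl fun y _ => by split <;> simp
  have hsym : (∑ x, ∑ y, if hammingDist x y = 1 then f y * f y else 0)
      = ∑ x, ∑ y, if hammingDist x y = 1 then f x * f x else 0 := by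
    rw [Finset.sum_comm]
    exact Finset.sum_congr rfl fun y _ => Finset.sum_congr rfl fun x _ => by
      rw [hammingDist_comm]
  calc (∑ x, adjOp f x * f x)
      = ∑ x, ∑ y, if hammingDist x y = 1 then f y * f x else 0 :=
        Finset.sum_congr rfl fun x _ => step1 x
    _ ≤ ∑ x, ∑ y, ((if hammingDist x y = 1 then f x * f x else 0)
          + (if hammingDist x y = 1 then f y * f y else 0))/2 := by
        apply Finset.sum_le_sum; intro x _
        apply Finset.sum_le_sum; intro y _
        split
        · nlinarith [sq_nonneg (f x - f y)]
        · norm_num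
    _ = ∑ x, ∑ y, if hammingDist x y = 1 then f x * f x else 0 := by
        have hinner : ∀ x : Ham n, (∑ y, ((if hammingDist x y = 1 then f x * f x else 0)
            + (if hammingDist x y = 1 then f y * f y else 0))/2)
            = (∑ y, if hammingDist x y = 1 then f x * f x else 0)/2
              + (∑ y, if hammingDist x y = 1 then f y * f y else 0)/2 := by
          intro x; rw [← Finset.sum_div, Finset.sum_add_distrib]; ring
        rw [Finset.sum_congr rfl fun x _ => hinner x, Finset.sum_add_distrib,
          ← Finset.sum_div, ← Finset.sum_div, hsym]
        ring
    _ = ∑ x, (f x * f x) * n := by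
        refine Finset.sum_congr rfl fun x _ => ?_
        rw [← degree x, Finset.mul_sum]
        exact Finset.sum_congr rfl fun y _ => by split <;> simp
    _ = n * ∑ x, f x * f x := by rw [← Finset.sum_mul]; ring

lemma lambdaB_ge (B : Set (Ham n)) (f : Ham n → ℝ) (hf : f ≠ 0)
    (hsupp : ∀ x, x ∉ B → f x = 0) (lam : ℝ)
    (h : lam * inn f f ≤ inn (adjOp f) f) : lam ≤ lambdaB B := by
  have hpos := inn_self_pos hf
  have hmem : inn (adjOp f) f / inn f f ∈
      {r | ∃ f : Ham n → ℝ, f ≠ 0 ∧ (∀ x, x ∉ B → f x = 0) ∧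
        r = inn (adjOp f) f / inn f f} := ⟨f, hf, hsupp, rfl⟩
  have hub : ∀ q ∈ {r | ∃ f : Ham n → ℝ, f ≠ 0 ∧ (∀ x, x ∉ B → f x = 0) ∧
      r = inn (adjOp f) f / inn f f}, q ≤ (n:ℝ) := by
    rintro q ⟨g, hg, _, rfl⟩
    rw [div_le_iff₀ (inn_self_pos hg)]
    exact inn_adj_le g
  refine le_trans ?_ (le_csSup ⟨n, hub⟩ hmem)
  rw [le_div_iff₀ hpos]
  exact h


lemma exists_norm_eq {m : ℕ} (hm : m ≤ n) : ∃ x : Ham n, hammingNorm x = m := by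
  refine ⟨fun j => if (j:ℕ) < m then 1 else 0, ?_⟩
  unfold hammingNorm
  rw [show (Finset.univ.filter fun j : Fin n => (if ((j:ℕ) < m) then (1:ZMod 2) else 0) ≠ 0)
      = Finset.univ.filter (fun j : Fin n => (j:ℕ) < m) by
    apply Finset.filter_congr; intro j _; by_cases h : (j:ℕ) < m <;> simp [h]]
  have hb : (Finset.univ.filter (fun j : Fin n => (j:ℕ) < m)).card = (Finset.range m).card := by
    refine Finset.card_bij (fun j _ => (j:ℕ)) ?_ ?_ ?_
    · intro a ha; simp only [Finset.mem_filter, Finset.mem_univ, true_and] at ha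
      exact Finset.mem_range.mpr ha
    · intro a ha b hb hab; exact Fin.val_injective hab
    · intro b hb
      exact ⟨⟨b, lt_of_lt_of_le (Finset.mem_range.mp hb) hm⟩,
        by simp [Finset.mem_range.mp hb], rfl⟩
  rw [hb, Finset.card_range]

lemma norm_le_n (x : Ham n) : hammingNorm x ≤ n := by
  have := hammingNorm_le_card_fintype (x := x)
  simpa using this

lemma key (n r W : ℕ) (hW : 1 ≤ W) (hrW : W + 1 ≤ r) (hrn : 2 * r ≤ n) :
    2 * Real.cos (Real.pi/(W+2)) * Real.sqrt (((r - W : ℕ):ℝ) * ((n:ℝ) - r))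
      ≤ lambdaB {x : Ham n | hammingNorm x ≤ r} := by
  set m : ℕ := r - W with hm
  have hm1 : 1 ≤ m := by omega
  have hmr : m ≤ r := by omega
  have hrn' : r < n := by omega
  have hnr_pos : (0:ℝ) < (n:ℝ) - r := by
    have : (r:ℝ) < n := Nat.cast_lt.mpr hrn'
    linarith
  set θ : ℝ := Real.pi/(W+2) with hθ
  have hθpos : 0 < θ := by
    apply div_pos Real.pi_pos
    positivity
  have hθtop : ((W:ℝ)+2) * θ = Real.pi := by
    rw [hθ]; field_simp
  have hθlt : θ < Real.pi := by
    rw [hθ]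
    rw [div_lt_iff₀ (by positivity)]
    nlinarith [Real.pi_pos]
  set sm : ℝ := Real.sqrt m with hsmdef
  set snr : ℝ := Real.sqrt ((n:ℝ) - r) with hsnrdef
  have hsm : 0 < sm := Real.sqrt_pos.mpr (by exact_mod_cast hm1)
  have hsnr : 0 < snr := Real.sqrt_pos.mpr hnr_pos
  have hsm2 : sm * sm = m := Real.mul_self_sqrt (by positivity)
  have hsnr2 : snr * snr = (n:ℝ) - r := Real.mul_self_sqrt hnr_pos.le
  set t : ℝ := sm / snr with htdef
  have ht : 0 < t := div_pos hsm hsnr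
  set c : ℝ := sm * snr with hcdef
  have hc : 0 < c := mul_pos hsm hsnr
  have hct : c * t = m := by
    rw [hcdef, htdef]; field_simp; nlinarith
  have hcnr : ((n:ℝ) - r) * t = c := by
    rw [htdef, hcdef]; field_simp; nlinarith
  set g : ℕ → ℝ := fun k =>
    if m ≤ k ∧ k ≤ r then Real.sin (((k - m + 1 : ℕ):ℝ) * θ) * t^k else 0 with hg
  have hsin_nonneg : ∀ j : ℕ, j ≤ W + 2 → 0 ≤ Real.sin ((j:ℝ) * θ) := by
    intro j hj
    apply Real.sin_nonneg_of_nonneg_of_le_pi (by positivity)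
    calc (j:ℝ) * θ ≤ ((W:ℝ)+2) * θ := by
          apply mul_le_mul_of_nonneg_right _ hθpos.le
          exact_mod_cast hj
      _ = Real.pi := hθtop
  have g_nonneg : ∀ k, 0 ≤ g k := by
    intro k
    rw [hg]
    dsimp only
    split
    · rename_i hk
      apply mul_nonneg _ (pow_nonneg ht.le _)
      exact hsin_nonneg _ (by omega)
    · exact le_refl 0
  set lam : ℝ := 2 * Real.cos θ * c with hlam
  -- pointwise inequality
  have hpoint : ∀ k, k ≤ n → lam * g k ≤ ((n - k:ℕ):ℝ) * g (k+1) + (k:ℝ) * g (k-1) := by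
    intro k hkn
    by_cases hks : m ≤ k ∧ k ≤ r
    · obtain ⟨hk1, hk2⟩ := hks
      set j : ℕ := k - m with hj
      have hjW : j ≤ W := by omega
      have hA : Real.sin (((j+2:ℕ):ℝ)*θ) * t^(k+1) ≤ g (k+1) := by
        by_cases h2 : k + 1 ≤ r
        · rw [hg]; dsimp only; rw [if_pos ⟨by omega, h2⟩]
          rw [show k+1-m+1 = j+2 by omega]
        · have hjw2 : j + 2 = W + 2 := by omega
          rw [hjw2, show (((W+2:ℕ)):ℝ) = (W:ℝ)+2 by push_cast; ring, hθtop, Real.sin_pi]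
          simpa using g_nonneg (k+1)
      have hB : Real.sin (((j:ℕ):ℝ)*θ) * t^(k-1) ≤ g (k-1) := by
        by_cases h2 : m + 1 ≤ k
        · rw [hg]; dsimp only; rw [if_pos ⟨by omega, by omega⟩]
          rw [show k-1-m+1 = j by omega]
        · have hkm : k = m := by omega
          have hj0 : j = 0 := by omega
          rw [hj0]
          simpa using g_nonneg (k-1)
      have hsA : 0 ≤ Real.sin (((j+2:ℕ):ℝ)*θ) := hsin_nonneg _ (by omega)
      have hsB : 0 ≤ Real.sin (((j:ℕ):ℝ)*θ) := hsin_nonneg _ (by omega)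
      have hcoefA : c ≤ ((n - k:ℕ):ℝ) * t := by
        rw [← hcnr]
        apply mul_le_mul_of_nonneg_right _ ht.le
        have : ((n - k:ℕ):ℝ) = (n:ℝ) - k := by
          push_cast [Nat.cast_sub hkn]; ring
        rw [this]
        have : (k:ℝ) ≤ r := Nat.cast_le.mpr hk2
        linarith
      have hcoefB : c * t ≤ (k:ℝ) := by
        rw [hct]; exact_mod_cast hk1
      have ht1 : c * Real.sin (((j+2:ℕ):ℝ)*θ) * t^k
          ≤ ((n - k:ℕ):ℝ) * (Real.sin (((j+2:ℕ):ℝ)*θ) * t^(k+1)) := by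
        have h1 : c * Real.sin (((j+2:ℕ):ℝ)*θ) * t^k
            ≤ (((n - k:ℕ):ℝ) * t) * Real.sin (((j+2:ℕ):ℝ)*θ) * t^k := by
          apply mul_le_mul_of_nonneg_right _ (pow_nonneg ht.le k)
          exact mul_le_mul_of_nonneg_right hcoefA hsA
        calc c * Real.sin (((j+2:ℕ):ℝ)*θ) * t^k
            ≤ (((n - k:ℕ):ℝ) * t) * Real.sin (((j+2:ℕ):ℝ)*θ) * t^k := h1
          _ = ((n - k:ℕ):ℝ) * (Real.sin (((j+2:ℕ):ℝ)*θ) * t^(k+1)) := by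
              rw [pow_succ]; ring
      have ht2 : c * Real.sin (((j:ℕ):ℝ)*θ) * t^k
          ≤ (k:ℝ) * (Real.sin (((j:ℕ):ℝ)*θ) * t^(k-1)) := by
        have hk1' : 1 ≤ k := by omega
        have hpow : t^k = t^(k-1) * t := by
          rw [← pow_succ]; congr 1; omega
        calc c * Real.sin (((j:ℕ):ℝ)*θ) * t^k
            = (c * t) * Real.sin (((j:ℕ):ℝ)*θ) * t^(k-1) := by rw [hpow]; ring
          _ ≤ (k:ℝ) * Real.sin (((j:ℕ):ℝ)*θ) * t^(k-1) := by
              apply mul_le_mul_of_nonneg_right _ (pow_nonneg ht.le _)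
              exact mul_le_mul_of_nonneg_right hcoefB hsB
          _ = (k:ℝ) * (Real.sin (((j:ℕ):ℝ)*θ) * t^(k-1)) := by ring
      have hgk : g k = Real.sin (((j+1:ℕ):ℝ)*θ) * t^k := by
        rw [hg]; dsimp only; rw [if_pos ⟨hk1, hk2⟩, show k-m+1 = j+1 by omega]
      have hid : Real.sin (((j+2:ℕ):ℝ)*θ) + Real.sin (((j:ℕ):ℝ)*θ)
          = 2 * Real.sin (((j+1:ℕ):ℝ)*θ) * Real.cos θ := by
        push_cast
        rw [show ((j:ℝ)+2)*θ = ((j:ℝ)+1)*θ + θ by ring,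
          show (j:ℝ)*θ = ((j:ℝ)+1)*θ - θ by ring,
          Real.sin_add, Real.sin_sub]
        ring
      have hRA : ((n - k:ℕ):ℝ) * (Real.sin (((j+2:ℕ):ℝ)*θ) * t^(k+1))
          ≤ ((n - k:ℕ):ℝ) * g (k+1) :=
        mul_le_mul_of_nonneg_left hA (by positivity)
      have hRB : (k:ℝ) * (Real.sin (((j:ℕ):ℝ)*θ) * t^(k-1)) ≤ (k:ℝ) * g (k-1) :=
        mul_le_mul_of_nonneg_left hB (by positivity)
      have hLHS : lam * g k
          = c * Real.sin (((j+2:ℕ):ℝ)*θ) * t^k + c * Real.sin (((j:ℕ):ℝ)*θ) * t^k := by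
        rw [hlam, hgk]
        linear_combination (-(c * t^k)) * hid
      rw [hLHS]
      linarith
    · have hgk : g k = 0 := by rw [hg]; dsimp only; rw [if_neg hks]
      rw [hgk, mul_zero]
      have h1 : (0:ℝ) ≤ ((n - k:ℕ):ℝ) * g (k+1) := mul_nonneg (by positivity) (g_nonneg _)
      have h2 : (0:ℝ) ≤ (k:ℝ) * g (k-1) := mul_nonneg (by positivity) (g_nonneg _)
      linarith
  -- the test function
  set f : Ham n → ℝ := fun y => g (hammingNorm y) with hf
  have hfne : f ≠ 0 := by
    obtain ⟨x₀, hx₀⟩ := exists_norm_eq (n := n) (m := m) (by omega)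
    apply Function.ne_iff.mpr
    refine ⟨x₀, ?_⟩
    rw [hf]; dsimp only
    rw [hx₀, Pi.zero_apply, hg]; dsimp only
    rw [if_pos ⟨le_refl m, hmr⟩, show m-m+1 = 1 by omega]
    apply ne_of_gt
    apply mul_pos _ (pow_pos ht m)
    simpa using Real.sin_pos_of_pos_of_lt_pi hθpos hθlt
  have hsupp : ∀ x, x ∉ {x : Ham n | hammingNorm x ≤ r} → f x = 0 := by
    intro x hx
    simp only [Set.mem_setOf_eq, not_le] at hx
    rw [hf]; dsimp only; rw [hg]; dsimp only
    rw [if_neg (by omega)]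
  have hsum : lam * inn f f ≤ inn (adjOp f) f := by
    unfold inn avg
    rw [← mul_div_assoc]
    gcongr
    rw [Finset.mul_sum]
    apply Finset.sum_le_sum
    intro x _
    have hkn := norm_le_n x
    have hp := hpoint (hammingNorm x) hkn
    have := mul_le_mul_of_nonneg_right hp (g_nonneg (hammingNorm x))
    calc lam * (f x * f x) = lam * g (hammingNorm x) * g (hammingNorm x) := by
          show lam * (g (hammingNorm x) * g (hammingNorm x)) = _; ring
        _ ≤ (((n - hammingNorm x:ℕ):ℝ) * g (hammingNorm x + 1)
              + (hammingNorm x:ℝ) * g (hammingNorm x - 1)) * g (hammingNorm x) := this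
        _ = adjOp f x * f x := by rw [hf]; dsimp only; rw [adjOp_comp_norm g x]
  have hfinal := lambdaB_ge _ f hfne hsupp lam hsum
  refine le_trans (le_of_eq ?_) hfinal
  rw [hlam, hθ, hcdef, hsmdef, hsnrdef, ← Real.sqrt_mul (by positivity)]

lemma lambdaB_nonneg (r : ℕ) : (0:ℝ) ≤ lambdaB {x : Ham n | hammingNorm x ≤ r} := by
  set g : ℕ → ℝ := fun k => if k = 0 then 1 else 0 with hg
  have g_nonneg : ∀ k, 0 ≤ g k := by intro k; rw [hg]; dsimp only; split <;> norm_num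
  set f : Ham n → ℝ := fun y => g (hammingNorm y) with hf
  apply lambdaB_ge _ f
  · apply Function.ne_iff.mpr
    refine ⟨0, ?_⟩
    show g (hammingNorm (0 : Ham n)) ≠ 0
    rw [hammingNorm_zero, hg]
    norm_num
  · intro x hx
    simp only [Set.mem_setOf_eq, not_le] at hx
    show g (hammingNorm x) = 0
    rw [hg]; dsimp only; rw [if_neg (by omega)]
  · rw [zero_mul]
    unfold inn avg
    apply div_nonneg _ (by positivity)
    apply Finset.sum_nonneg
    intro x _
    have : adjOp f x = ((n - hammingNorm x : ℕ) : ℝ) * g (hammingNorm x + 1)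
        + (hammingNorm x : ℝ) * g (hammingNorm x - 1) := adjOp_comp_norm g x
    show 0 ≤ adjOp f x * f x
    have hfx : f x = g (hammingNorm x) := rfl
    rw [this, hfx]
    apply mul_nonneg _ (g_nonneg _)
    exact add_nonneg (mul_nonneg (by positivity) (g_nonneg _))
      (mul_nonneg (by positivity) (g_nonneg _))


lemma arith_main (ε n W a b s u cosθ : ℝ)
    (hε : 0 < ε) (hb0 : 0 ≤ b) (hs0 : 0 ≤ s) (hu0 : 0 ≤ u)
    (ha1 : 1 ≤ a) (hba : b ≤ a)
    (hWa : (a-b)*a ≤ W) (hW0 : 0 ≤ W)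
    (hsu : s ≤ u) (huu : u*u = n)
    (h4W : 4*W ≤ ε*u)
    (hcos : 1 - ε/2 ≤ cosθ)
    (has : a*s ≤ n/2) :
    2*(a*s) - ε*n ≤ 2*cosθ*(b*s) := by
  have p1 : 2*(a*s) - 2*(b*s) ≤ ε*n/2 := by
    have q1 : 2*s*(a-b) ≤ 2*s*((a-b)*a) := by
      nlinarith [mul_nonneg (mul_nonneg hs0 (sub_nonneg.mpr hba)) (sub_nonneg.mpr ha1)]
    have q2 : 2*s*((a-b)*a) ≤ 2*s*W := by
      have := mul_le_mul_of_nonneg_left hWa (show (0:ℝ) ≤ 2*s by positivity)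
      linarith
    have q3 : 2*s*W ≤ 2*u*W := by
      have := mul_le_mul_of_nonneg_left hsu (show (0:ℝ) ≤ 2*W by positivity)
      linarith
    have q4 : 2*u*W ≤ ε*(u*u)/2 := by
      have := mul_le_mul_of_nonneg_left h4W (show (0:ℝ) ≤ u/2 by positivity)
      nlinarith [this]
    rw [huu] at q4
    linarith
  have p2 : 2*(b*s) - ε*n/2 ≤ 2*cosθ*(b*s) := by
    have hbs0 : 0 ≤ b*s := mul_nonneg hb0 hs0
    have hbs_le : b*s ≤ n/2 :=
      le_trans (mul_le_mul_of_nonneg_right hba hs0) has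
    nlinarith [hcos, hbs0, hbs_le, hε]
  linarith


end S15

/-- the maximal adjacency eigenvalue of the Hamming ball B(r) satisfies
lambda_{B(r)} >= 2 sqrt(r(n-r)) - o(n). -/
theorem stmt15 :
    ∀ ε > (0 : ℝ), ∃ N : ℕ, ∀ n ≥ N, ∀ r : ℕ, 2 * r ≤ n →
      lambdaB {x : Ham n | hammingNorm x ≤ r} ≥
        2 * Real.sqrt ((r : ℝ) * ((n : ℝ) - r)) - ε * n := by
  intro ε hε
  set W : ℕ := ⌈Real.pi / Real.sqrt ε⌉₊ + 1 with hWdef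
  have hW1 : 1 ≤ W := by omega
  have hsqε : 0 < Real.sqrt ε := Real.sqrt_pos.mpr hε
  have hθε : (Real.pi / ((W:ℝ)+2))^2 ≤ ε := by
    have h1 : Real.pi / Real.sqrt ε ≤ (W:ℝ) := by
      refine le_trans (Nat.le_ceil _) ?_
      rw [hWdef]; push_cast; linarith
    have h2 : Real.pi / ((W:ℝ)+2) ≤ Real.sqrt ε := by
      rw [div_le_iff₀ (by positivity)]
      rw [div_le_iff₀ hsqε] at h1
      nlinarith [Real.pi_pos]
    calc (Real.pi / ((W:ℝ)+2))^2 ≤ (Real.sqrt ε)^2 := by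
          apply pow_le_pow_left₀ (by positivity) h2
      _ = ε := Real.sq_sqrt hε.le
  set N : ℕ := ⌈(4*(W:ℝ))/ε^2⌉₊ + ⌈16*(W:ℝ)^2/ε^2⌉₊ + 1 with hNdef
  refine ⟨N, fun n hn r h2r => ?_⟩
  have hn1 : 1 ≤ n := by omega
  have hNa : (4*(W:ℝ))/ε^2 ≤ n := by
    refine le_trans (Nat.le_ceil _) ?_
    have h1 : ⌈(4*(W:ℝ))/ε^2⌉₊ ≤ n := by omega
    exact_mod_cast Nat.cast_le.mpr h1
  have hNb : 16*(W:ℝ)^2/ε^2 ≤ n := by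
    refine le_trans (Nat.le_ceil _) ?_
    have h1 : ⌈16*(W:ℝ)^2/ε^2⌉₊ ≤ n := by omega
    exact_mod_cast Nat.cast_le.mpr h1
  have hrn : (r:ℝ) ≤ (n:ℝ)/2 := by
    have : (2*r:ℝ) ≤ n := by exact_mod_cast h2r
    linarith
  have hnr0 : (0:ℝ) ≤ (n:ℝ) - r := by linarith [hrn, Nat.cast_nonneg (α := ℝ) r]
  by_cases hcase : r ≤ W
  · -- small r : lambdaB ≥ 0 and target ≤ 0
    have hlb := S15.lambdaB_nonneg (n := n) r
    have hsmall : 2 * Real.sqrt ((r : ℝ) * ((n : ℝ) - r)) ≤ ε * n := by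
      have hb : (r:ℝ) * ((n:ℝ) - r) ≤ (ε * n / 2)^2 := by
        have hrW : (r:ℝ) ≤ W := Nat.cast_le.mpr hcase
        have hnrn : (n:ℝ) - r ≤ n := by linarith [Nat.cast_nonneg (α := ℝ) r]
        have e1 : 4*(W:ℝ) ≤ ε^2 * n := by
          rw [div_le_iff₀ (by positivity)] at hNa; linarith
        have e2 : (r:ℝ)*((n:ℝ)-r) ≤ (W:ℝ)*n :=
          mul_le_mul hrW hnrn hnr0 (Nat.cast_nonneg W)
        have e3 : (W:ℝ)*n ≤ ε^2*(n:ℝ)^2/4 := by nlinarith [e1, Nat.cast_nonneg (α := ℝ) n]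
        nlinarith [e2, e3]
      calc 2 * Real.sqrt ((r : ℝ) * ((n : ℝ) - r))
          ≤ 2 * Real.sqrt ((ε * n / 2)^2) := by
            apply mul_le_mul_of_nonneg_left (Real.sqrt_le_sqrt hb) (by norm_num)
        _ = 2 * (ε * n / 2) := by rw [Real.sqrt_sq (by positivity)]
        _ = ε * n := by ring
    rw [ge_iff_le]
    linarith
  · -- main case
    push_neg at hcase
    have hkey := S15.key n r W hW1 (by omega) h2r
    rw [ge_iff_le]
    refine le_trans ?_ hkey
    -- arithmetic
    set θ : ℝ := Real.pi / ((W:ℝ)+2) with hθ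
    have hθpos : 0 < θ := by rw [hθ]; positivity
    set a : ℝ := Real.sqrt r with ha
    set b : ℝ := Real.sqrt (((r - W : ℕ)):ℝ) with hb
    set s : ℝ := Real.sqrt ((n:ℝ) - r) with hs
    set u : ℝ := Real.sqrt n with hu
    have hWr : (W:ℝ) + 1 ≤ r := by exact_mod_cast hcase
    have hcast : (((r - W:ℕ)):ℝ) = (r:ℝ) - W := by
      push_cast [Nat.cast_sub hcase.le]; ring
    have ha2 : a^2 = r := Real.sq_sqrt (by positivity)
    have hb2 : b^2 = (r:ℝ) - W := by
      rw [hb, hcast]; exact Real.sq_sqrt (by linarith)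
    have hs2 : s^2 = (n:ℝ) - r := Real.sq_sqrt hnr0
    have hu2 : u^2 = (n:ℝ) := Real.sq_sqrt (by positivity)
    have hu2' : u*u = (n:ℝ) := Real.mul_self_sqrt (by positivity)
    have ha0 : 0 ≤ a := Real.sqrt_nonneg _
    have hb0 : 0 ≤ b := Real.sqrt_nonneg _
    have hs0 : 0 ≤ s := Real.sqrt_nonneg _
    have hu0 : 0 ≤ u := Real.sqrt_nonneg _
    have hsqrt1 : Real.sqrt ((r:ℝ)*((n:ℝ)-r)) = a * s := by
      rw [ha, hs, ← Real.sqrt_mul (by positivity)]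
    have hsqrt2 : Real.sqrt ((((r - W:ℕ)):ℝ)*((n:ℝ)-r)) = b * s := by
      rw [hb, hs, ← Real.sqrt_mul (by rw [hcast]; linarith)]
    have hba : b ≤ a := by
      apply Real.sqrt_le_sqrt
      rw [hcast]; linarith [Nat.cast_nonneg (α := ℝ) W]
    have ha1 : 1 ≤ a := by
      rw [ha, show (1:ℝ) = Real.sqrt 1 by simp]
      apply Real.sqrt_le_sqrt
      have : (1:ℝ) ≤ r := by linarith [Nat.cast_nonneg (α := ℝ) W]
      linarith
    have has2 : a * s ≤ (n:ℝ)/2 := by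
      rw [← hsqrt1]
      calc Real.sqrt ((r:ℝ)*((n:ℝ)-r)) ≤ Real.sqrt (((n:ℝ)/2)^2) := by
            apply Real.sqrt_le_sqrt
            nlinarith [hrn, hnr0]
        _ = (n:ℝ)/2 := Real.sqrt_sq (by positivity)
    have hsu : s ≤ u := by
      apply Real.sqrt_le_sqrt
      linarith [Nat.cast_nonneg (α := ℝ) r]
    have h4W : 4*(W:ℝ) ≤ ε*u := by
      have h1 : 4*(W:ℝ)/ε ≤ u := by
        rw [hu]
        calc 4*(W:ℝ)/ε = Real.sqrt ((4*(W:ℝ)/ε)^2) := (Real.sqrt_sq (by positivity)).symm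
          _ ≤ Real.sqrt ((n:ℝ)) := by
              apply Real.sqrt_le_sqrt
              calc (4*(W:ℝ)/ε)^2 = 16*(W:ℝ)^2/ε^2 := by ring
                _ ≤ ((n:ℝ)) := hNb
      rw [div_le_iff₀ hε] at h1
      linarith
    have hcos : 1 - ε/2 ≤ Real.cos θ := by
      have := Real.one_sub_sq_div_two_le_cos (x := θ)
      have h2 : θ^2 ≤ ε := hθε
      linarith
    have hWa : (a-b)*a ≤ (W:ℝ) := by nlinarith [hba, hb0]
    rw [hsqrt1, hsqrt2]
    exact S15.arith_main ε n (W:ℝ) a b s u (Real.cos θ) hε hb0 hs0 hu0 ha1 hba hWa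
      (Nat.cast_nonneg W) hsu hu2' h4W hcos has2
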